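/- arXiv:1001.5465 — 2 statements merged into one kernel-verified Lean document; each statement's English description precedes it below -/
import Mathlib

section
/- Let G be a finite group, μ : G → G → ℂ a factor system (|μ(f,g)| = 1 for all f,g; μ(e,f) = μ(f,e) = 1; and μ(h,f)μ(hf,g) = μ(h,fg)μ(f,g) for all f,g,h). Let A, A', B be nonempty finite index types, let U : G → Matrix A A ℂ and U' : G → Matrix A' A' ℂ be two projective unitary representations of G, both with the same factor system μ, and assume the family (U f)_{f∈G} is linearly independent. Let W : G → Matrix B B ℂ. If 𝒰 := Σ_{f∈G} (U f) ⊗ (W f) is unitary, then 𝒰' := Σ_{f∈G} (U' f) ⊗ (W f) is also unitary. -/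
open Matrix Kronecker

lemma star_kron {A B : Type*} [Fintype A] [Fintype B]
    (X : Matrix A A ℂ) (Y : Matrix B B ℂ) :
    star (X ⊗ₖ Y) = (star X) ⊗ₖ (star Y) := by
  ext ⟨a, b⟩ ⟨a', b'⟩
  simp [conjTranspose_apply, mul_comm]

lemma kron_sum {G A B : Type*} [Fintype G] [Fintype A] [Fintype B]
    (X : Matrix A A ℂ) (Y : G → Matrix B B ℂ) :
    X ⊗ₖ (∑ g, Y g) = ∑ g, X ⊗ₖ (Y g) := by
  ext ⟨a, b⟩ ⟨a', b'⟩
  simp [Matrix.sum_apply, Finset.mul_sum]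

lemma mu_conj_mul {G : Type*} [Group G] (μ : G → G → ℂ)
    (hμabs : ∀ f g : G, ‖μ f g‖ = 1) (f g : G) :
    (starRingEnd ℂ) (μ f g) * μ f g = 1 := by
  have h := hμabs f g
  have : μ f g * (starRingEnd ℂ) (μ f g) = 1 := by
    rw [Complex.mul_conj]
    norm_cast
    rw [← Complex.sq_norm, h]; norm_num
  rw [mul_comm] at this; exact this

lemma star_rep {G A : Type*} [Group G] [Fintype A] [DecidableEq A]
    (μ : G → G → ℂ) (hμabs : ∀ f g : G, ‖μ f g‖ = 1)
    (V : G → Matrix A A ℂ)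
    (hVu : ∀ f : G, V f ∈ Matrix.unitaryGroup A ℂ)
    (hVe : V 1 = 1)
    (hVm : ∀ f g : G, V f * V g = μ f g • V (f * g)) (g : G) :
    star (V g) = (starRingEnd ℂ) (μ g g⁻¹) • V g⁻¹ := by
  have h1 : V g * V g⁻¹ = μ g g⁻¹ • (1 : Matrix A A ℂ) := by
    rw [hVm, mul_inv_cancel, hVe]
  have h2 : star (V g) * V g = 1 := (Matrix.mem_unitaryGroup_iff'.mp (hVu g))
  have h3 : V g⁻¹ = μ g g⁻¹ • star (V g) := by
    calc V g⁻¹ = (star (V g) * V g) * V g⁻¹ := by rw [h2, one_mul]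
    _ = star (V g) * (V g * V g⁻¹) := by rw [mul_assoc]
    _ = star (V g) * (μ g g⁻¹ • (1 : Matrix A A ℂ)) := by rw [h1]
    _ = μ g g⁻¹ • star (V g) := by rw [mul_smul_comm, mul_one]
  rw [h3, smul_smul, mu_conj_mul μ hμabs, one_smul]

lemma expand_prod {G A B : Type*} [Group G] [Fintype G] [DecidableEq G]
    [Fintype A] [DecidableEq A] [Fintype B] [DecidableEq B]
    (μ : G → G → ℂ) (hμabs : ∀ f g : G, ‖μ f g‖ = 1)
    (V : G → Matrix A A ℂ)
    (hVu : ∀ f : G, V f ∈ Matrix.unitaryGroup A ℂ)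
    (hVe : V 1 = 1)
    (hVm : ∀ f g : G, V f * V g = μ f g • V (f * g))
    (W : G → Matrix B B ℂ) :
    (∑ f : G, (V f) ⊗ₖ (W f)) * star (∑ f : G, (V f) ⊗ₖ (W f)) =
      ∑ h : G, (V h) ⊗ₖ
        (∑ g : G, ((starRingEnd ℂ) (μ g g⁻¹) * μ (h * g) g⁻¹) •
          (W (h * g) * star (W g))) := by
  rw [star_sum, Finset.sum_mul_sum]
  have step : ∀ f g : G, (V f ⊗ₖ W f) * star (V g ⊗ₖ W g) =
      (((starRingEnd ℂ) (μ g g⁻¹) * μ f g⁻¹) • V (f * g⁻¹)) ⊗ₖ (W f * star (W g)) := by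
    intro f g
    rw [star_kron, ← mul_kronecker_mul, star_rep μ hμabs V hVu hVe hVm g,
      mul_smul_comm, hVm, smul_smul]
  simp only [step]
  rw [Finset.sum_comm]
  have reindex : ∀ g : G, (∑ f : G,
      (((starRingEnd ℂ) (μ g g⁻¹) * μ f g⁻¹) • V (f * g⁻¹)) ⊗ₖ (W f * star (W g))) =
      ∑ h : G, (((starRingEnd ℂ) (μ g g⁻¹) * μ (h * g) g⁻¹) • V h) ⊗ₖ
        (W (h * g) * star (W g)) := by
    intro g
    symm
    refine Fintype.sum_equiv (Equiv.mulRight g) _ _ ?_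
    intro h
    simp
  simp only [reindex]
  rw [Finset.sum_comm]
  refine Finset.sum_congr rfl fun h _ => ?_
  rw [kron_sum]
  refine Finset.sum_congr rfl fun g _ => ?_
  rw [smul_kronecker, kronecker_smul]

theorem stmt_8 {G : Type*} [Group G] [Fintype G] [DecidableEq G]
    (μ : G → G → ℂ)
    (hμabs : ∀ f g : G, ‖μ f g‖ = 1)
    (hμel : ∀ f : G, μ 1 f = 1) (hμer : ∀ f : G, μ f 1 = 1)
    (hμc : ∀ f g h : G, μ h f * μ (h * f) g = μ h (f * g) * μ f g)
    {A A' B : Type*} [Fintype A] [DecidableEq A] [Nonempty A]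
    [Fintype A'] [DecidableEq A'] [Nonempty A']
    [Fintype B] [DecidableEq B] [Nonempty B]
    (U : G → Matrix A A ℂ) (U' : G → Matrix A' A' ℂ)
    (hUu : ∀ f : G, U f ∈ Matrix.unitaryGroup A ℂ)
    (hUe : U 1 = 1)
    (hUm : ∀ f g : G, U f * U g = μ f g • U (f * g))
    (hU'u : ∀ f : G, U' f ∈ Matrix.unitaryGroup A' ℂ)
    (hU'e : U' 1 = 1)
    (hU'm : ∀ f g : G, U' f * U' g = μ f g • U' (f * g))
    (hUli : LinearIndependent ℂ U)
    (W : G → Matrix B B ℂ)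
    (h𝒰 : (∑ f : G, (U f) ⊗ₖ (W f)) ∈ Matrix.unitaryGroup (A × B) ℂ) :
    (∑ f : G, (U' f) ⊗ₖ (W f)) ∈ Matrix.unitaryGroup (A' × B) ℂ := by
  set M : G → Matrix B B ℂ := fun h =>
    ∑ g : G, ((starRingEnd ℂ) (μ g g⁻¹) * μ (h * g) g⁻¹) • (W (h * g) * star (W g))
    with hM
  have hexp : (∑ f : G, (U f) ⊗ₖ (W f)) * star (∑ f : G, (U f) ⊗ₖ (W f)) =
      ∑ h : G, (U h) ⊗ₖ (M h) :=
    expand_prod μ hμabs U hUu hUe hUm W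
  have h1 : (∑ h : G, (U h) ⊗ₖ (M h)) = 1 := by
    rw [← hexp]
    exact Matrix.mem_unitaryGroup_iff.mp h𝒰
  -- define N h = M h - (if h = 1 then 1 else 0); show ∑ U h ⊗ₖ N h = 0
  set N : G → Matrix B B ℂ := fun h => M h - (if h = 1 then 1 else 0) with hN
  have h2 : (∑ h : G, (U h) ⊗ₖ (N h)) = 0 := by
    have hsum1 : (∑ h : G, (U h) ⊗ₖ (if h = 1 then (1 : Matrix B B ℂ) else 0)) = 1 := by
      rw [Fintype.sum_eq_single (1 : G) (by intro h hh; simp [hh]), if_pos rfl, hUe,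
        one_kronecker_one]
    calc (∑ h : G, (U h) ⊗ₖ (N h))
        = (∑ h : G, (U h) ⊗ₖ (M h)) -
          (∑ h : G, (U h) ⊗ₖ (if h = 1 then (1 : Matrix B B ℂ) else 0)) := by
          rw [← Finset.sum_sub_distrib]
          refine Finset.sum_congr rfl fun h _ => ?_
          ext ⟨a, b⟩ ⟨a', b'⟩
          simp [hN, Matrix.sub_apply, mul_sub]
      _ = 1 - 1 := by rw [h1, hsum1]
      _ = 0 := sub_self 1
  have hNzero : ∀ h : G, N h = 0 := by
    intro h
    ext b b'
    have hcoef : ∀ x : G, N x b b' = 0 := by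
      have hsum : (∑ x : G, (N x b b') • U x) = 0 := by
        ext a a'
        have := congrFun (congrFun h2 (a, b)) (a', b')
        simpa [Matrix.sum_apply, mul_comm] using this
      exact fun x => Fintype.linearIndependent_iff.mp hUli _ hsum x
    simpa using hcoef h
  have hM1 : M 1 = 1 := by
    have := hNzero 1
    simpa [hN, sub_eq_zero] using this
  have hMh : ∀ h : G, h ≠ 1 → M h = 0 := by
    intro h hh
    have := hNzero h
    simpa [hN, hh, sub_eq_zero] using this
  have hexp' : (∑ f : G, (U' f) ⊗ₖ (W f)) * star (∑ f : G, (U' f) ⊗ₖ (W f)) =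
      ∑ h : G, (U' h) ⊗ₖ (M h) :=
    expand_prod μ hμabs U' hU'u hU'e hU'm W
  rw [Matrix.mem_unitaryGroup_iff, hexp',
    Fintype.sum_eq_single (1 : G) (by intro h hh; simp [hMh h hh]),
    hU'e, hM1, one_kronecker_one]
end

section
/- Let G be a finite group, μ : G → G → ℂ a factor system (|μ(f,g)| = 1 for all f,g; μ(e,f) = μ(f,e) = 1; and μ(h,f)μ(hf,g) = μ(h,fg)μ(f,g) for all f,g,h). Let ι be a finite index type, d : ι → ℕ with d λ ≥ 1, and for each λ ∈ ι let D λ : G → Matrix (Fin (d λ)) (Fin (d λ)) ℂ be an irreducible projective unitary representation of G with factor system μ (the only invariant subspaces of every D λ f are trivial), pairwise inequivalent (for λ ≠ λ' there is no invertible S with S · (D λ f) = (D λ' f) · S for all f), and suppose Σ_{λ∈ι} (d λ)² = |G|. Then the square matrix D̂, with rows indexed by triples K = (λ, j, k) (λ ∈ ι, j,k ∈ Fin (d λ)) and columns indexed by f ∈ G, defined by D̂(K, f) = √(d λ / |G|) · (D λ f)(j,k), is unitary. -/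
open Matrix


open Matrix

section SchurAux

variable {G : Type*} [Group G] [Fintype G] [DecidableEq G]

private lemma matrix_eq_zero_of_mulVec' {m n : Type*} [Fintype n] [DecidableEq n]
    (M : Matrix m n ℂ) (h : ∀ v, M.mulVec v = 0) : M = 0 := by
  ext i j
  simpa using congrFun (h (Pi.single j 1)) i

private lemma key_adj' {n : ℕ} (μ : G → G → ℂ)
    (hμabs : ∀ f g : G, ‖μ f g‖ = 1)
    (D' : G → Matrix (Fin n) (Fin n) ℂ)
    (hDu : ∀ f, D' f ∈ Matrix.unitaryGroup (Fin n) ℂ)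
    (hDm : ∀ f g, D' f * D' g = μ f g • D' (f * g))
    (g f : G) :
    μ g f • (D' f)ᴴ = (D' (g * f))ᴴ * D' g := by
  have h1 := congrArg Matrix.conjTranspose (hDm g f)
  rw [Matrix.conjTranspose_mul, Matrix.conjTranspose_smul] at h1
  have hu : (D' g)ᴴ * D' g = 1 := by
    simpa [Matrix.star_eq_conjTranspose] using (Unitary.mem_iff.mp (hDu g)).1
  have h2 : (D' f)ᴴ = (star (μ g f)) • ((D' (g * f))ᴴ * D' g) := by
    calc (D' f)ᴴ = (D' f)ᴴ * ((D' g)ᴴ * D' g) := by rw [hu, Matrix.mul_one]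
    _ = ((D' f)ᴴ * (D' g)ᴴ) * D' g := by rw [Matrix.mul_assoc]
    _ = (star (μ g f) • (D' (g * f))ᴴ) * D' g := by rw [h1]
    _ = star (μ g f) • ((D' (g * f))ᴴ * D' g) := by rw [Matrix.smul_mul]
  rw [h2, smul_smul]
  have hone : μ g f * star (μ g f) = 1 := by
    rw [Complex.star_def, Complex.mul_conj, ← Complex.sq_norm, hμabs, one_pow,
      Complex.ofReal_one]
  rw [hone, one_smul]

private lemma schur_inter' {n m : ℕ} (μ : G → G → ℂ)
    (hμabs : ∀ f g : G, ‖μ f g‖ = 1)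
    (A : G → Matrix (Fin n) (Fin n) ℂ) (B : G → Matrix (Fin m) (Fin m) ℂ)
    (hBu : ∀ f, B f ∈ Matrix.unitaryGroup (Fin m) ℂ)
    (hAm : ∀ f g, A f * A g = μ f g • A (f * g))
    (hBm : ∀ f g, B f * B g = μ f g • B (f * g))
    (X : Matrix (Fin n) (Fin m) ℂ) (g : G) :
    A g * (∑ f : G, A f * X * (B f)ᴴ) = (∑ f : G, A f * X * (B f)ᴴ) * B g := by
  rw [Matrix.mul_sum, Matrix.sum_mul]
  refine Fintype.sum_equiv (Equiv.mulLeft g) _ _ (fun f => ?_)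
  simp only [Equiv.coe_mulLeft]
  have hk := key_adj' μ hμabs B hBu hBm g f
  calc A g * (A f * X * (B f)ᴴ)
      = (A g * A f) * X * (B f)ᴴ := by rw [← Matrix.mul_assoc, ← Matrix.mul_assoc]
    _ = μ g f • (A (g * f) * X * (B f)ᴴ) := by
        rw [hAm, Matrix.smul_mul, Matrix.smul_mul]
    _ = A (g * f) * X * (μ g f • (B f)ᴴ) := by rw [Matrix.mul_smul]
    _ = A (g * f) * X * ((B (g * f))ᴴ * B g) := by rw [hk]
    _ = (A (g * f) * X * (B (g * f))ᴴ) * B g := by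
        rw [Matrix.mul_assoc (A (g*f) * X), ← Matrix.mul_assoc]

private lemma schur_zero' {n m : ℕ}
    (A : G → Matrix (Fin n) (Fin n) ℂ) (B : G → Matrix (Fin m) (Fin m) ℂ)
    (hirrA : ∀ S : Submodule ℂ (Fin n → ℂ),
      (∀ f : G, ∀ v ∈ S, (A f).mulVec v ∈ S) → S = ⊥ ∨ S = ⊤)
    (hirrB : ∀ S : Submodule ℂ (Fin m → ℂ),
      (∀ f : G, ∀ v ∈ S, (B f).mulVec v ∈ S) → S = ⊥ ∨ S = ⊤)
    (M : Matrix (Fin n) (Fin m) ℂ)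
    (hcomm : ∀ g : G, A g * M = M * B g)
    (hne : ¬ ∃ (S : Matrix (Fin m) (Fin n) ℂ) (T : Matrix (Fin n) (Fin m) ℂ),
        S * T = 1 ∧ T * S = 1 ∧ ∀ f : G, S * A f = B f * S) :
    M = 0 := by
  by_contra hM0
  apply hne
  have hkerinv : ∀ f : G, ∀ v ∈ LinearMap.ker (Matrix.toLin' M),
      (B f).mulVec v ∈ LinearMap.ker (Matrix.toLin' M) := by
    intro f v hv
    simp only [LinearMap.mem_ker, Matrix.toLin'_apply] at hv ⊢
    rw [Matrix.mulVec_mulVec, ← hcomm, ← Matrix.mulVec_mulVec, hv, Matrix.mulVec_zero]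
  have hker : LinearMap.ker (Matrix.toLin' M) = ⊥ := by
    rcases hirrB _ hkerinv with h | h
    · exact h
    · exfalso; apply hM0
      apply matrix_eq_zero_of_mulVec'
      intro v
      have hv : v ∈ LinearMap.ker (Matrix.toLin' M) := h ▸ Submodule.mem_top
      simpa [Matrix.toLin'_apply] using hv
  have hrangeinv : ∀ f : G, ∀ w ∈ LinearMap.range (Matrix.toLin' M),
      (A f).mulVec w ∈ LinearMap.range (Matrix.toLin' M) := by
    intro f w hw
    obtain ⟨v, rfl⟩ := hw
    refine ⟨(B f).mulVec v, ?_⟩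
    simp only [Matrix.toLin'_apply]
    rw [Matrix.mulVec_mulVec, ← hcomm, ← Matrix.mulVec_mulVec]
  have hrange : LinearMap.range (Matrix.toLin' M) = ⊤ := by
    rcases hirrA _ hrangeinv with h | h
    · exfalso; apply hM0
      apply matrix_eq_zero_of_mulVec'
      intro v
      have : Matrix.toLin' M v ∈ (⊥ : Submodule ℂ (Fin n → ℂ)) :=
        h ▸ LinearMap.mem_range_self _ v
      simpa [Matrix.toLin'_apply] using this
    · exact h
  have hbij : Function.Bijective (Matrix.toLin' M) :=
    ⟨LinearMap.ker_eq_bot.mp hker, LinearMap.range_eq_top.mp hrange⟩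
  set e := LinearEquiv.ofBijective (Matrix.toLin' M) hbij with he
  set S := LinearMap.toMatrix' (e.symm : (Fin n → ℂ) →ₗ[ℂ] (Fin m → ℂ)) with hS
  have hMS : M * S = 1 := by
    apply Matrix.toLin'.injective
    rw [Matrix.toLin'_mul, Matrix.toLin'_toMatrix', Matrix.toLin'_one]
    exact LinearMap.ext fun v => e.apply_symm_apply v
  have hSM : S * M = 1 := by
    apply Matrix.toLin'.injective
    rw [Matrix.toLin'_mul, Matrix.toLin'_toMatrix', Matrix.toLin'_one]
    exact LinearMap.ext fun v => e.symm_apply_apply v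
  refine ⟨S, M, hSM, hMS, fun f => ?_⟩
  calc S * A f = S * A f * (M * S) := by rw [hMS, Matrix.mul_one]
    _ = S * ((A f * M) * S) := by
        rw [Matrix.mul_assoc S, ← Matrix.mul_assoc (A f)]
    _ = S * ((M * B f) * S) := by rw [hcomm]
    _ = (S * M) * (B f * S) := by
        rw [Matrix.mul_assoc M, ← Matrix.mul_assoc S]
    _ = B f * S := by rw [hSM, Matrix.one_mul]

private lemma schur_scalar' {n : ℕ} (hn : 1 ≤ n)
    (A : G → Matrix (Fin n) (Fin n) ℂ)
    (hirrA : ∀ S : Submodule ℂ (Fin n → ℂ),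
      (∀ f : G, ∀ v ∈ S, (A f).mulVec v ∈ S) → S = ⊥ ∨ S = ⊤)
    (M : Matrix (Fin n) (Fin n) ℂ)
    (hcomm : ∀ g : G, A g * M = M * A g) :
    ∃ c : ℂ, M = c • 1 := by
  haveI : Nonempty (Fin n) := ⟨⟨0, hn⟩⟩
  obtain ⟨c, hc⟩ :=
    Module.End.exists_eigenvalue (Matrix.toLin' M : Module.End ℂ (Fin n → ℂ))
  obtain ⟨v, hv⟩ := hc.exists_hasEigenvector
  refine ⟨c, ?_⟩
  set N : Matrix (Fin n) (Fin n) ℂ := M - c • 1 with hN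
  have hNcomm : ∀ g : G, A g * N = N * A g := by
    intro g
    rw [hN, Matrix.mul_sub, Matrix.sub_mul, hcomm g, Matrix.mul_smul, Matrix.smul_mul,
      Matrix.mul_one, Matrix.one_mul]
  have hkerinv : ∀ f : G, ∀ w ∈ LinearMap.ker (Matrix.toLin' N),
      (A f).mulVec w ∈ LinearMap.ker (Matrix.toLin' N) := by
    intro f w hw
    simp only [LinearMap.mem_ker, Matrix.toLin'_apply] at hw ⊢
    rw [Matrix.mulVec_mulVec, ← hNcomm, ← Matrix.mulVec_mulVec, hw, Matrix.mulVec_zero]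
  have hvk : v ∈ LinearMap.ker (Matrix.toLin' N) := by
    simp only [LinearMap.mem_ker, Matrix.toLin'_apply, hN, Matrix.sub_mulVec,
      Matrix.smul_mulVec, Matrix.one_mulVec]
    have : M.mulVec v = c • v := hv.apply_eq_smul
    rw [this, sub_self]
  have hker : LinearMap.ker (Matrix.toLin' N) = ⊤ := by
    rcases hirrA _ hkerinv with h | h
    · exfalso
      rw [h, Submodule.mem_bot] at hvk
      exact hv.2 hvk
    · exact h
  have hN0 : N = 0 := by
    apply matrix_eq_zero_of_mulVec'
    intro w
    have hw : w ∈ LinearMap.ker (Matrix.toLin' N) := hker ▸ Submodule.mem_top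
    simpa [Matrix.toLin'_apply] using hw
  rw [← sub_eq_zero, ← hN, hN0]

end SchurAux

private lemma entry_helper' {n m : ℕ} (A : Matrix (Fin n) (Fin n) ℂ)
    (B : Matrix (Fin m) (Fin m) ℂ) (j k : Fin n) (j' k' : Fin m) :
    (A * Matrix.single k k' (1:ℂ) * Bᴴ) j j' = A j k * star (B j' k') := by
  rw [Matrix.mul_apply]
  have h1 : ∀ b : Fin m, (A * Matrix.single k k' (1:ℂ)) j b
      = if b = k' then A j k else 0 := by
    intro b
    rw [Matrix.mul_apply]
    simp [Matrix.single, ite_and, Finset.sum_ite_eq, Finset.sum_ite_eq',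
      eq_comm (a := b)]
  simp only [h1, Matrix.conjTranspose_apply, ite_mul, zero_mul]
  rw [Finset.sum_ite_eq' Finset.univ k' (fun b => A j k * star (B j' b))]
  simp

theorem stmt_11 {G : Type*} [Group G] [Fintype G] [DecidableEq G]
    (μ : G → G → ℂ)
    (hμabs : ∀ f g : G, ‖μ f g‖ = 1)
    (hμel : ∀ f : G, μ 1 f = 1) (hμer : ∀ f : G, μ f 1 = 1)
    (hμc : ∀ f g h : G, μ h f * μ (h * f) g = μ h (f * g) * μ f g)
    {ι : Type*} [Fintype ι] [DecidableEq ι]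
    (d : ι → ℕ) (hd : ∀ lam : ι, 1 ≤ d lam)
    (D : (lam : ι) → G → Matrix (Fin (d lam)) (Fin (d lam)) ℂ)
    (hDu : ∀ (lam : ι) (f : G), D lam f ∈ Matrix.unitaryGroup (Fin (d lam)) ℂ)
    (hDe : ∀ lam : ι, D lam 1 = 1)
    (hDm : ∀ (lam : ι) (f g : G), D lam f * D lam g = μ f g • D lam (f * g))
    (hirr : ∀ (lam : ι) (S : Submodule ℂ (Fin (d lam) → ℂ)),
      (∀ (f : G), ∀ v ∈ S, (D lam f).mulVec v ∈ S) → S = ⊥ ∨ S = ⊤)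
    (hineq : ∀ lam lam' : ι, lam ≠ lam' →
      ¬ ∃ (S : Matrix (Fin (d lam')) (Fin (d lam)) ℂ)
          (T : Matrix (Fin (d lam)) (Fin (d lam')) ℂ),
        S * T = 1 ∧ T * S = 1 ∧ ∀ f : G, S * D lam f = D lam' f * S)
    (hcomplete : ∑ lam : ι, (d lam) ^ 2 = Fintype.card G)
    (Dhat : Matrix (Σ lam : ι, Fin (d lam) × Fin (d lam)) G ℂ)
    (hDhat : ∀ (K : Σ lam : ι, Fin (d lam) × Fin (d lam)) (f : G),
      Dhat K f = (Real.sqrt ((d K.1 : ℝ) / (Fintype.card G : ℝ)) : ℂ)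
        * D K.1 f K.2.1 K.2.2) :
    Dhat * Dhatᴴ = 1 ∧ Dhatᴴ * Dhat = 1 := by
  have hGne : ((Fintype.card G : ℝ)) ≠ 0 := Nat.cast_ne_zero.mpr Fintype.card_ne_zero
  have horthz : ∀ (l l' : ι), l ≠ l' → ∀ (j k : Fin (d l)) (j' k' : Fin (d l')),
      (∑ f : G, D l f j k * star (D l' f j' k')) = 0 := by
    intro l l' hll j k j' k'
    have hz : (∑ f : G, D l f * Matrix.single k k' (1:ℂ) * (D l' f)ᴴ) = 0 :=
      schur_zero' (D l) (D l') (hirr l) (hirr l') _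
        (fun g => schur_inter' μ hμabs (D l) (D l') (hDu l') (hDm l) (hDm l') _ g)
        (hineq l l' hll)
    calc (∑ f : G, D l f j k * star (D l' f j' k'))
        = (∑ f : G, D l f * Matrix.single k k' (1:ℂ) * (D l' f)ᴴ) j j' := by
          rw [Matrix.sum_apply]
          exact Finset.sum_congr rfl fun f _ => (entry_helper' _ _ _ _ _ _).symm
      _ = 0 := by rw [hz]; rfl
  have horths : ∀ (l : ι) (j k j' k' : Fin (d l)),
      (∑ f : G, D l f j k * star (D l f j' k')) =
        ((Fintype.card G : ℂ) / (d l : ℂ))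
          * ((if j = j' then 1 else 0) * (if k = k' then 1 else 0)) := by
    intro l j k j' k'
    obtain ⟨c, hc⟩ := schur_scalar' (hd l) (D l) (hirr l)
      (∑ f : G, D l f * Matrix.single k k' (1:ℂ) * (D l f)ᴴ)
      (fun g => schur_inter' μ hμabs (D l) (D l) (hDu l) (hDm l) (hDm l) _ g)
    have htrE : Matrix.trace
        (Matrix.single k k' (1:ℂ) : Matrix (Fin (d l)) (Fin (d l)) ℂ)
        = if k = k' then 1 else 0 := by
      rw [Matrix.trace]
      simp [Matrix.diag, Matrix.single, ite_and, Finset.sum_ite_eq, eq_comm]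
    have htrM : Matrix.trace (∑ f : G, D l f * Matrix.single k k' (1:ℂ) * (D l f)ᴴ)
        = (Fintype.card G : ℂ) * (if k = k' then 1 else 0) := by
      rw [Matrix.trace_sum]
      have h1 : ∀ f : G, Matrix.trace (D l f * Matrix.single k k' (1:ℂ) * (D l f)ᴴ)
          = (if k = k' then (1:ℂ) else 0) := by
        intro f
        have hu : (D l f)ᴴ * D l f = 1 := by
          simpa [Matrix.star_eq_conjTranspose] using (Unitary.mem_iff.mp (hDu l f)).1
        rw [Matrix.trace_mul_comm, ← Matrix.mul_assoc, hu, Matrix.one_mul, htrE]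
      simp only [h1]
      rw [Finset.sum_const, Finset.card_univ, nsmul_eq_mul]
    have hdlne : ((d l : ℂ)) ≠ 0 := Nat.cast_ne_zero.mpr (by have := hd l; omega)
    have hceq : c * (d l : ℂ) = (Fintype.card G : ℂ) * (if k = k' then 1 else 0) := by
      rw [hc, Matrix.trace_smul, Matrix.trace_one, smul_eq_mul] at htrM
      simpa [Fintype.card_fin] using htrM
    have hcval : c = (Fintype.card G : ℂ) * (if k = k' then 1 else 0) / (d l : ℂ) := by
      rw [eq_div_iff hdlne]; exact hceq
    calc (∑ f : G, D l f j k * star (D l f j' k'))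
        = (∑ f : G, D l f * Matrix.single k k' (1:ℂ) * (D l f)ᴴ) j j' := by
          rw [Matrix.sum_apply]
          exact Finset.sum_congr rfl fun f _ => (entry_helper' _ _ _ _ _ _).symm
      _ = (c • (1 : Matrix (Fin (d l)) (Fin (d l)) ℂ)) j j' := by rw [hc]
      _ = c * (if j = j' then 1 else 0) := by
          simp [Matrix.smul_apply, Matrix.one_apply]
      _ = ((Fintype.card G : ℂ) / (d l : ℂ))
          * ((if j = j' then 1 else 0) * (if k = k' then 1 else 0)) := by
          rw [hcval]; ring
  have h1 : Dhat * Dhatᴴ = 1 := by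
    ext K K'
    obtain ⟨l, j, k⟩ := K
    obtain ⟨l', j', k'⟩ := K'
    rw [Matrix.mul_apply]
    have hterm : ∀ f : G, Dhat ⟨l, (j,k)⟩ f * Dhatᴴ f ⟨l', (j',k')⟩
        = (((Real.sqrt ((d l : ℝ)/(Fintype.card G : ℝ)) : ℂ))
            * ((Real.sqrt ((d l' : ℝ)/(Fintype.card G : ℝ)) : ℂ)))
          * (D l f j k * star (D l' f j' k')) := by
      intro f
      rw [Matrix.conjTranspose_apply, hDhat, hDhat]
      simp only [star_mul', Complex.star_def, Complex.conj_ofReal]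
      ring
    rw [Finset.sum_congr rfl (fun f _ => hterm f), ← Finset.mul_sum]
    by_cases hll : l = l'
    · subst hll
      rw [horths l j k j' k']
      have hone : (1 : Matrix (Σ lam : ι, Fin (d lam) × Fin (d lam))
            (Σ lam : ι, Fin (d lam) × Fin (d lam)) ℂ) ⟨l,(j,k)⟩ ⟨l,(j',k')⟩
          = (if j = j' then 1 else 0) * (if k = k' then 1 else 0) := by
        rw [Matrix.one_apply]
        by_cases hj : j = j' <;> by_cases hk : k = k' <;>
          simp [hj, hk, Sigma.mk.inj_iff]
      rw [hone]
      by_cases hj : j = j' <;> by_cases hk : k = k' <;>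
        simp only [hj, hk, if_pos, if_neg, if_true, if_false, ite_self] <;>
        [skip; ring; ring; ring]
      · simp only [if_pos rfl, mul_one]
        have hsq : ((Real.sqrt ((d l : ℝ)/(Fintype.card G : ℝ)) : ℂ))
            * ((Real.sqrt ((d l : ℝ)/(Fintype.card G : ℝ)) : ℂ))
            = (((d l : ℝ)/(Fintype.card G : ℝ) : ℝ) : ℂ) := by
          rw [← Complex.ofReal_mul, Real.mul_self_sqrt (by positivity)]
        rw [hsq]
        have hdlne : ((d l : ℂ)) ≠ 0 := Nat.cast_ne_zero.mpr (by have := hd l; omega)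
        have hGne' : ((Fintype.card G : ℂ)) ≠ 0 :=
          Nat.cast_ne_zero.mpr Fintype.card_ne_zero
        push_cast
        field_simp
    · rw [horthz l l' hll j k j' k', Matrix.one_apply,
        if_neg (fun h => hll (congrArg Sigma.fst h))]
      ring
  have ecard : Fintype.card (Σ lam : ι, Fin (d lam) × Fin (d lam)) = Fintype.card G := by
    rw [Fintype.card_sigma]
    simpa [Fintype.card_prod, Fintype.card_fin, ← pow_two] using hcomplete
  exact ⟨h1, (Matrix.mul_eq_one_comm_of_equiv (Fintype.equivOfCardEq ecard)).mp h1⟩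
end
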